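/- arXiv:1003.5131 — 2 statements merged into one kernel-verified Lean document; each statement's English description precedes it below -/
import Mathlib

section
/- Let θ > 0 and let (d_m)_{m∈ℕ} be a probability mass function on ℕ. Fix d ≥ 2 and α ∈ (0,∞)^d with |α| = θ, and suppose that for all x, y ∈ Δ_{d−1} the double series Σ_{m=0}^∞ d_m Σ_{n=0}^m (m_[n]/(θ+m)_(n)) |Q^α_n(x,y)| converges. Then for every n the series ρ_n := Σ_{m≥n} (m_[n]/(θ+m)_(n)) d_m converges, ρ_0 = 1, and Σ_{n=0}^∞ ρ_n Q^α_n(x,y) ≥ 0 for all x, y ∈ Δ_{d−1}. -/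
open MeasureTheory Finset

noncomputable section

/-- Rising factorial `(a)_(n) = a (a+1) ⋯ (a+n−1)`. -/
def rf (a : ℝ) : ℕ → ℝ
  | 0 => 1
  | n + 1 => rf a n * (a + n)

/-- Falling factorial `N_[n] = N (N−1) ⋯ (N−n+1)` of a natural number, as a real. -/
def ff (N n : ℕ) : ℝ := (N.descFactorial n : ℝ)

/-- Triangular array `a^θ_{n,m}` (meaningful for `0 ≤ m ≤ n`). -/
def acoef (θ : ℝ) (n m : ℕ) : ℝ :=
  if n = 0 then 1
  else (θ + 2 * n - 1) * (-1 : ℝ) ^ (n - m) * rf (θ + m) (n - 1) /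
    ((m.factorial : ℝ) * ((n - m).factorial : ℝ))

/-- The simplex `Δ_{d−1} = {x ∈ [0,1]^d : x₁ + ⋯ + x_d = 1}`. -/
def simplex (d : ℕ) : Set (Fin d → ℝ) :=
  {x | (∀ i, 0 ≤ x i ∧ x i ≤ 1) ∧ ∑ i, x i = 1}

/-- `ξ^α_m(x,y)`. -/
def xiK {d : ℕ} (α : Fin d → ℝ) (m : ℕ) (x y : Fin d → ℝ) : ℝ :=
  ∑ l ∈ Finset.Nat.antidiagonalTuple d m,
    ((m.factorial : ℝ) / ∏ i, ((l i).factorial : ℝ)) *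
      (rf (∑ i, α i) m / ∏ i, rf (α i) (l i)) * ∏ i, (x i * y i) ^ l i

/-- Jacobi polynomial kernel `Q^α_n(x,y)`. -/
def Qker {d : ℕ} (α : Fin d → ℝ) (n : ℕ) (x y : Fin d → ℝ) : ℝ :=
  ∑ m ∈ Finset.range (n + 1), acoef (∑ i, α i) n m * xiK α m x y

/-- Dirichlet–multinomial pmf `DM_α(l; m)`. -/
def DM {d : ℕ} (α : Fin d → ℝ) (l : Fin d → ℕ) (m : ℕ) : ℝ :=
  ((m.factorial : ℝ) / ∏ i, ((l i).factorial : ℝ)) *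
    (∏ i, rf (α i) (l i)) / rf (∑ i, α i) m

/-- `ξ^{H,α}_m(r,s)`. -/
def xiH {d : ℕ} (α : Fin d → ℝ) (m : ℕ) (r s : Fin d → ℕ) : ℝ :=
  ∑ l ∈ Finset.Nat.antidiagonalTuple d m,
    DM (fun i => α i + r i) l m * DM (fun i => α i + s i) l m / DM α l m

/-- Hahn polynomial kernel `H^α_n(r,s)` for `|r| = |s| = N`. -/
def Hker {d : ℕ} (α : Fin d → ℝ) (N n : ℕ) (r s : Fin d → ℕ) : ℝ :=
  (rf ((∑ i, α i) + N) n / ff N n) *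
    ∑ m ∈ Finset.range (n + 1), acoef (∑ i, α i) n m * xiH α m r s

/-- `χ^{H,α}_m(r,s)`. -/
def chiH {d : ℕ} (α : Fin d → ℝ) (N m : ℕ) (r s : Fin d → ℕ) : ℝ :=
  ∑ l ∈ Finset.Nat.antidiagonalTuple d m,
    (1 / DM α l m) *
      (((m.factorial : ℝ) / ∏ i, ((l i).factorial : ℝ)) * (∏ i, ff (r i) (l i)) / ff N m) *
      (((m.factorial : ℝ) / ∏ i, ((l i).factorial : ℝ)) * (∏ i, ff (s i) (l i)) / ff N m)

/-- Normalized Jacobi polynomial `R_n^{a,b}` on `[0,1]`. -/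
def Rpoly (a b : ℝ) (n : ℕ) (x : ℝ) : ℝ :=
  ∑ k ∈ Finset.range (n + 1),
    (-1 : ℝ) ^ k * (n.choose k : ℝ) * (rf ((n : ℝ) + (a + b) - 1) k / rf b k) * (1 - x) ^ k

/-- `ζ_n^{a,b}`. -/
def zeta (a b : ℝ) (n : ℕ) : ℝ :=
  if n = 0 then 1
  else ((a + b) + 2 * n - 1) * rf (a + b) (n - 1) * rf b n / ((n.factorial : ℝ) * rf a n)

/-- Hahn polynomial `h_n^{a,b}(r; N)`. -/
def hahnPoly (a b : ℝ) (N n r : ℕ) : ℝ :=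
  ∑ k ∈ Finset.range (n + 1),
    (-1 : ℝ) ^ k * (n.choose k : ℝ) * rf ((n : ℝ) + (a + b) - 1) k * ff r k /
      (rf a k * ff N k)

/-- `u^{a,b}_{N,n}`. -/
def uCoef (a b : ℝ) (N n : ℕ) : ℝ :=
  if n = 0 then 1
  else (N.choose n : ℝ) * ((a + b) + 2 * n - 1) * rf (a + b) (n - 1) * rf a n /
    (rf ((a + b) + N) n * rf b n)

/-- Beta function `B(a,b) = Γ(a)Γ(b)/Γ(a+b)`. -/
def BetaFn (a b : ℝ) : ℝ := Real.Gamma a * Real.Gamma b / Real.Gamma (a + b)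

/-- Condition (G) on the parameter vector `α`. -/
def CondG {d : ℕ} (α : Fin d → ℝ) : Prop :=
  ∀ j : Fin d, 0 < (j : ℕ) →
    (α j ≤ ∑ i ∈ Finset.univ.filter fun i : Fin d => (i : ℕ) < (j : ℕ), α i) ∧
      (1 / 2 ≤ α j ∨ 2 ≤ ∑ i ∈ Finset.univ.filter fun i : Fin d => (i : ℕ) ≤ (j : ℕ), α i)

/-- Density of the Dirichlet distribution in the coordinates `(u₁, …, u_{d−1})`. -/
def dirichletDensity (k : ℕ) (α : Fin (k + 1) → ℝ) (u : Fin k → ℝ) : ℝ :=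
  if (∀ i, 0 < u i ∧ u i < 1) ∧ ∑ i, u i < 1 then
    (Real.Gamma (∑ i, α i) / ∏ i, Real.Gamma (α i)) *
      (∏ i : Fin k, u i ^ (α (Fin.castSucc i) - 1)) * (1 - ∑ i, u i) ^ (α (Fin.last k) - 1)
  else 0

/-- The Dirichlet probability measure `D_α` on `Δ_{d−1} ⊆ ℝ^d`, `d = k + 1`. -/
def dirichlet (k : ℕ) (α : Fin (k + 1) → ℝ) : Measure (Fin (k + 1) → ℝ) :=
  ((volume : Measure (Fin k → ℝ)).withDensity fun u =>
      ENNReal.ofReal (dirichletDensity k α u)).map fun u => Fin.snoc u (1 - ∑ i, u i)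

/-! ### Auxiliary lemmas for Statement 17 -/

lemma rf_succ (a : ℝ) (n : ℕ) : rf a (n + 1) = rf a n * (a + n) := rfl

lemma rf_zero (a : ℝ) : rf a 0 = 1 := rfl

lemma rf_pos {a : ℝ} (ha : 0 < a) : ∀ n, 0 < rf a n
  | 0 => one_pos
  | n + 1 => mul_pos (rf_pos ha n) (add_pos_of_pos_of_nonneg ha (Nat.cast_nonneg n))

lemma ff_zero' (N : ℕ) : ff N 0 = 1 := by simp [ff]

lemma ff_nonneg (N n : ℕ) : 0 ≤ ff N n := Nat.cast_nonneg _

lemma ff_eq_zero {N n : ℕ} (h : N < n) : ff N n = 0 := by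
  simp [ff, Nat.descFactorial_eq_zero_iff_lt.mpr h]

lemma ff_succ (N n : ℕ) : ff N (n + 1) = ((N : ℝ) - n) * ff N n := by
  rcases lt_or_ge n N with h | h
  · unfold ff
    rw [Nat.descFactorial_succ]
    push_cast [Nat.cast_sub h.le]
    ring
  · rcases eq_or_lt_of_le h with rfl | h'
    · rw [ff_eq_zero (Nat.lt_succ_self N)]
      simp
    · rw [ff_eq_zero h', ff_eq_zero (h'.trans (Nat.lt_succ_self n)), mul_zero]

lemma ff_le_rf {θ : ℝ} (hθ : 0 < θ) (N : ℕ) : ∀ n, ff N n ≤ rf (θ + N) n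
  | 0 => by rw [ff_zero', rf_zero]
  | n + 1 => by
    have hpos : (0 : ℝ) < θ + N := by positivity
    rcases le_or_gt (n + 1) N with h | h
    · rw [ff_succ, rf_succ]
      have hn : (n : ℝ) ≤ N := by exact_mod_cast Nat.le_of_succ_le h
      have h1 : (0 : ℝ) ≤ (N : ℝ) - n := by linarith
      have h2 : ((N : ℝ) - n) ≤ θ + N + n := by
        have : (0 : ℝ) ≤ (n : ℝ) := Nat.cast_nonneg n
        linarith
      calc ((N : ℝ) - n) * ff N n ≤ (θ + N + n) * rf (θ + N) n :=
            mul_le_mul h2 (ff_le_rf hθ N n) (ff_nonneg N n) (by positivity)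
        _ = rf (θ + N) n * (θ + N + n) := mul_comm _ _
    · rw [ff_eq_zero h]
      exact (rf_pos hpos _).le

lemma fact_ne (n : ℕ) : ((n.factorial : ℕ) : ℝ) ≠ 0 :=
  Nat.cast_ne_zero.mpr n.factorial_ne_zero

/-- Telescoping certificate for the inverse-pair identity. -/
def Tf (θ : ℝ) (m q j : ℕ) : ℝ :=
  (-1 : ℝ) ^ j * ff m (q + 1 + j) * rf (θ + q) (q + j) /
    (((m : ℝ) - q) * rf (θ + m) (q + j) * (j.factorial : ℝ) * (q.factorial : ℝ))

lemma telescope (θ : ℝ) (hθ : 0 < θ) {m q : ℕ} (hqm : q < m) (j : ℕ) :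
    (ff m (q + 1 + j) / rf (θ + m) (q + 1 + j)) * acoef θ (q + 1 + j) q =
      Tf θ m q (j + 1) - Tf θ m q j := by
  have e1 : q + 1 + j = q + j + 1 := by omega
  have e3 : q + 1 + j - 1 = q + j := by omega
  have e4 : q + 1 + j - q = j + 1 := by omega
  have e5 : q + (j + 1) = q + j + 1 := by omega
  rw [acoef, if_neg (by omega : ¬ q + 1 + j = 0), e3, e4]
  unfold Tf
  rw [e1, e5, show q + 1 + (j + 1) = q + j + 1 + 1 by omega]
  rw [ff_succ m (q + j + 1), rf_succ (θ + q) (q + j), rf_succ (θ + m) (q + j),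
    Nat.factorial_succ]
  have hB : (0 : ℝ) < rf (θ + m) (q + j) := rf_pos (by positivity) _
  have hD : (0 : ℝ) < θ + m + (q + j : ℕ) := by positivity
  have hmq : ((m : ℝ) - q) ≠ 0 := by
    have : (q : ℝ) < m := by exact_mod_cast hqm
    intro h; linarith [sub_eq_zero.mp h]
  have hfj := fact_ne j
  have hfq := fact_ne q
  have hj1 : ((j : ℝ) + 1) ≠ 0 := by positivity
  push_cast
  field_simp
  ring

lemma diag (θ : ℝ) (hθ : 0 < θ) (m : ℕ) :
    (ff m m / rf (θ + m) m) * acoef θ m m = 1 := by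
  cases m with
  | zero => simp [ff, rf, acoef]
  | succ k =>
    rw [acoef, if_neg (Nat.succ_ne_zero k)]
    rw [Nat.sub_self, Nat.succ_sub_one]
    unfold ff
    rw [Nat.descFactorial_self, rf_succ (θ + (k + 1 : ℕ)) k]
    have hR : (0 : ℝ) < rf (θ + (k + 1 : ℕ)) k := rf_pos (by positivity) _
    have hD : (0 : ℝ) < θ + ((k : ℝ) + 1) + k := by positivity
    have hf := fact_ne (k + 1)
    push_cast at *
    field_simp
    ring

lemma base_eq (θ : ℝ) (hθ : 0 < θ) {m q : ℕ} (hqm : q < m) :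
    (ff m q / rf (θ + m) q) * acoef θ q q = Tf θ m q 0 := by
  have hmq : ((m : ℝ) - q) ≠ 0 := by
    have : (q : ℝ) < m := by exact_mod_cast hqm
    intro h; linarith [sub_eq_zero.mp h]
  cases q with
  | zero =>
    unfold Tf
    rw [acoef]
    simp only [if_pos rfl, pow_zero, Nat.add_zero, Nat.factorial_zero]
    rw [ff_zero', rf_zero, rf_zero]
    unfold ff
    have hm : ((m : ℝ)) ≠ 0 := by simpa using hmq
    simp only [Nat.descFactorial_one, if_true, Nat.cast_ofNat, Nat.cast_zero, Nat.cast_one]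
    field_simp
    simp
  | succ k =>
    unfold Tf
    rw [acoef, if_neg (Nat.succ_ne_zero k)]
    rw [Nat.sub_self, Nat.succ_sub_one]
    rw [show k + 1 + 1 + 0 = (k + 1) + 1 by omega, show k + 1 + 0 = k + 1 by omega]
    rw [ff_succ m (k + 1), rf_succ (θ + (k + 1 : ℕ)) k]
    have hB : (0 : ℝ) < rf (θ + m) (k + 1) := rf_pos (by positivity) _
    have hA : (0 : ℝ) < rf (θ + (k + 1 : ℕ)) k := rf_pos (by positivity) _
    have hf := fact_ne (k + 1)
    have h0 := fact_ne 0
    push_cast at *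
    field_simp
    ring

lemma kron (θ : ℝ) (hθ : 0 < θ) {m q : ℕ} (hq : q ≤ m) :
    ∑ n ∈ Finset.Ico q (m + 1), (ff m n / rf (θ + m) n) * acoef θ n q =
      if q = m then 1 else 0 := by
  rcases eq_or_lt_of_le hq with rfl | hqm
  · rw [if_pos rfl, Nat.Ico_succ_singleton, Finset.sum_singleton]
    exact diag θ hθ q
  · rw [if_neg hqm.ne]
    rw [Finset.sum_eq_sum_Ico_succ_bot (by omega : q < m + 1)]
    rw [Finset.sum_Ico_eq_sum_range, show m + 1 - (q + 1) = m - q by omega]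
    rw [Finset.sum_congr rfl fun j _ => telescope θ hθ hqm j, Finset.sum_range_sub]
    have hT : Tf θ m q (m - q) = 0 := by
      unfold Tf
      rw [show q + 1 + (m - q) = m + 1 by omega, ff_eq_zero (Nat.lt_succ_self m)]
      simp
    rw [hT, base_eq θ hθ hqm]
    ring

lemma sum_c_Q (θ : ℝ) (hθ : 0 < θ) {d : ℕ} (α : Fin d → ℝ) (hαθ : ∑ i, α i = θ)
    (m : ℕ) (x y : Fin d → ℝ) :
    ∑ n ∈ Finset.range (m + 1), (ff m n / rf (θ + m) n) * Qker α n x y = xiK α m x y := by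
  simp only [Qker, hαθ, Finset.mul_sum]
  have swap := Finset.sum_Ico_Ico_comm 0 (m + 1)
    (fun q n => (ff m n / rf (θ + m) n) * (acoef θ n q * xiK α q x y))
  simp only [Finset.range_eq_Ico]
  rw [← swap]
  have hstep : ∀ q ∈ Finset.Ico 0 (m + 1),
      ∑ n ∈ Finset.Ico q (m + 1), (ff m n / rf (θ + m) n) * (acoef θ n q * xiK α q x y) =
        (if q = m then 1 else 0) * xiK α q x y := by
    intro q hq
    have hq' : q ≤ m := by
      have := (Finset.mem_Ico.mp hq).2; omega
    rw [← kron θ hθ hq', Finset.sum_mul]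
    exact Finset.sum_congr rfl fun n _ => by ring
  rw [Finset.sum_congr rfl hstep]
  rw [← Finset.range_eq_Ico]
  simp

lemma xiK_nonneg {d : ℕ} {α : Fin d → ℝ} (hα : ∀ i, 0 < α i) (hs : 0 < ∑ i, α i)
    (m : ℕ) {x y : Fin d → ℝ} (hx : x ∈ simplex d) (hy : y ∈ simplex d) :
    0 ≤ xiK α m x y := by
  apply Finset.sum_nonneg
  intro l _
  apply mul_nonneg (mul_nonneg _ _)
  · exact Finset.prod_nonneg fun i _ =>
      pow_nonneg (mul_nonneg (hx.1 i).1 (hy.1 i).1) _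
  · exact div_nonneg (Nat.cast_nonneg _)
      (Finset.prod_nonneg fun i _ => Nat.cast_nonneg _)
  · exact div_nonneg (rf_pos hs m).le
      (Finset.prod_nonneg fun i _ => (rf_pos (hα i) _).le)

/-- probability mass functions on ℕ generate Jacobi positive-definite
sequences, for every dimension and every `α` with `|α| = θ`. -/
theorem stmt_17 (θ : ℝ) (hθ : 0 < θ) (w : ℕ → ℝ) (hw0 : ∀ m, 0 ≤ w m)
    (hw1 : HasSum w 1)
    (d : ℕ) (hd : 2 ≤ d) (α : Fin d → ℝ) (hα : ∀ i, 0 < α i) (hαθ : ∑ i, α i = θ)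
    (hconv : ∀ x ∈ simplex d, ∀ y ∈ simplex d,
      Summable fun m => w m *
        ∑ n ∈ Finset.range (m + 1), (ff m n / rf (θ + m) n) * |Qker α n x y|) :
    (∀ n : ℕ, Summable fun m => (ff m n / rf (θ + m) n) * w m) ∧
      (∑' m, (ff m 0 / rf (θ + m) 0) * w m) = 1 ∧
      (∀ x ∈ simplex d, ∀ y ∈ simplex d,
        0 ≤ ∑' n, (∑' m, (ff m n / rf (θ + m) n) * w m) * Qker α n x y) := by
  have hc0 : ∀ m n : ℕ, 0 ≤ ff m n / rf (θ + m) n := fun m n =>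
    div_nonneg (ff_nonneg m n) (rf_pos (by positivity) n).le
  have hc1 : ∀ m n : ℕ, ff m n / rf (θ + m) n ≤ 1 := fun m n =>
    (div_le_one (rf_pos (by positivity) n)).mpr (ff_le_rf hθ m n)
  have part1 : ∀ n : ℕ, Summable fun m => (ff m n / rf (θ + m) n) * w m := by
    intro n
    apply Summable.of_nonneg_of_le
      (fun m => mul_nonneg (hc0 m n) (hw0 m))
      (fun m => ?_) hw1.summable
    calc (ff m n / rf (θ + m) n) * w m ≤ 1 * w m :=
          mul_le_mul_of_nonneg_right (hc1 m n) (hw0 m)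
      _ = w m := one_mul _
  refine ⟨part1, ?_, ?_⟩
  · calc (∑' m, (ff m 0 / rf (θ + m) 0) * w m) = ∑' m, w m := by
          apply tsum_congr
          intro m
          rw [ff_zero', rf_zero]
          ring
      _ = 1 := hw1.tsum_eq
  · intro x hx y hy
    have hzero : ∀ m n : ℕ, m < n → ff m n / rf (θ + m) n = 0 := by
      intro m n h
      rw [ff_eq_zero h, zero_div]
    -- summability of the (m, n)-indexed absolute family
    have habs : Summable fun p : ℕ × ℕ =>
        |(ff p.1 p.2 / rf (θ + p.1) p.2) * w p.1 * Qker α p.2 x y| := by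
      rw [summable_prod_of_nonneg (fun p => abs_nonneg _)]
      constructor
      · intro m
        apply summable_of_ne_finset_zero (s := Finset.range (m + 1))
        intro n hn
        rw [hzero m n (by simpa using hn)]
        simp
      · apply (hconv x hx y hy).congr
        intro m
        rw [tsum_eq_sum (s := Finset.range (m + 1))
          (fun n hn => by rw [hzero m n (by simpa using hn)]; simp)]
        rw [Finset.mul_sum]
        apply Finset.sum_congr rfl
        intro n _
        rw [abs_mul, abs_mul, abs_of_nonneg (hc0 m n), abs_of_nonneg (hw0 m)]
        ring
    have hsum : Summable (Function.uncurry fun n m : ℕ =>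
        (ff m n / rf (θ + m) n) * w m * Qker α n x y) := by
      apply Summable.of_abs
      exact (Equiv.prodComm ℕ ℕ).summable_iff.mpr habs
    have chain : (∑' n, (∑' m, (ff m n / rf (θ + m) n) * w m) * Qker α n x y) =
        ∑' m, w m * xiK α m x y := by
      calc (∑' n, (∑' m, (ff m n / rf (θ + m) n) * w m) * Qker α n x y)
          = ∑' n, ∑' m, (ff m n / rf (θ + m) n) * w m * Qker α n x y :=
            tsum_congr fun n => tsum_mul_right.symm
        _ = ∑' m, ∑' n, (ff m n / rf (θ + m) n) * w m * Qker α n x y :=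
            (Summable.tsum_comm hsum).symm
        _ = ∑' m, w m * xiK α m x y := by
            apply tsum_congr
            intro m
            rw [tsum_eq_sum (s := Finset.range (m + 1))
              (fun n hn => by rw [hzero m n (by simpa using hn)]; simp)]
            rw [← sum_c_Q θ hθ α hαθ m x y, Finset.mul_sum]
            exact Finset.sum_congr rfl fun n _ => by ring
    rw [chain]
    exact tsum_nonneg fun m =>
      mul_nonneg (hw0 m) (xiK_nonneg hα (by rw [hαθ]; exact hθ) m hx hy)
end
end

section
/- Let μ be a probability measure on a measurable space E, let ι be an index type equipped with a degree map deg : ι → ℕ whose fibers {m : deg m = j} are finite, and let (P_m)_{m∈ι} be square-integrable measurable functions P_m : E → ℝ. Define the kernels K_j(x,y) := Σ_{deg m = j} P_m(x) P_m(y). Assume: (i) for all j, l ∈ ℕ and all x, z ∈ E, ∫_E K_j(x,y) K_l(z,y) μ(dy) = δ_{jl} K_j(x,z); and (ii) for each j, the functions {P_m : deg m = j} are linearly independent as elements of L²(μ). Then the family (P_m) is orthonormal in L²(μ): ∫_E P_m P_{m'} dμ = δ_{m m'} for all m, m' ∈ ι. -/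
open MeasureTheory Finset

noncomputable section

lemma lp_coeFn_sum {α : Type*} [MeasurableSpace α] {μ : Measure α} {κ : Type*}
    (s : Finset κ) (f : κ → Lp ℝ 2 μ) :
    ⇑(∑ i ∈ s, f i) =ᵐ[μ] fun x => ∑ i ∈ s, f i x := by
  classical
  induction s using Finset.induction_on with
  | empty => simp only [Finset.sum_empty]; exact Lp.coeFn_zero ℝ 2 μ
  | @insert a s h ih =>
    rw [Finset.sum_insert h]
    filter_upwards [Lp.coeFn_add (f a) (∑ i ∈ s, f i), ih] with x hx hix
    simp only [hx, Pi.add_apply, hix, Finset.sum_insert h]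

/-- if the degree-kernels of a family of square-integrable functions
form an orthogonal kernel system and each degree-block is linearly independent in
`L²(μ)`, then the family is orthonormal. -/
theorem stmt_19 {E : Type*} [MeasurableSpace E] (μ : Measure E) [IsProbabilityMeasure μ]
    {ι : Type*} [DecidableEq ι] (deg : ι → ℕ) (hfib : ∀ j : ℕ, {m : ι | deg m = j}.Finite)
    (P : ι → E → ℝ) (hmeas : ∀ m, Measurable (P m))
    (hL2 : ∀ m, MemLp (P m) 2 μ)
    (K : ℕ → E → E → ℝ)
    (hK : ∀ j x y, K j x y = ∑ m ∈ (hfib j).toFinset, P m x * P m y)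
    (horth : ∀ j l : ℕ, ∀ x z : E,
      (∫ y, K j x y * K l z y ∂μ) = (if j = l then (1 : ℝ) else 0) * K j x z)
    (hind : ∀ j : ℕ, LinearIndependent ℝ
      (fun m : {m : ι // deg m = j} => (hL2 m.1).toLp (P m.1))) :
    ∀ m m' : ι, (∫ x, P m x * P m' x ∂μ) = if m = m' then (1 : ℝ) else 0 := by
  classical
  -- integrability of products
  have hmul : ∀ a b : ι, Integrable (fun y => P a y * P b y) μ := by
    intro a b
    have h1 : MemLp ((P a) • (P b)) 1 μ :=
      (hL2 b).smul (hL2 a) (hpqr := ⟨by rw [inv_one, ENNReal.inv_two_add_inv_two]⟩)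
    have := memLp_one_iff_integrable.mp h1
    simp only [smul_eq_mul] at this; exact this
  -- key identity
  have key : ∀ j l : ℕ, ∀ x z : E,
      ∑ m ∈ (hfib j).toFinset, (∑ m' ∈ (hfib l).toFinset,
          (∫ y, P m y * P m' y ∂μ) * P m' z) * P m x
        = (if j = l then (1 : ℝ) else 0) * ∑ m ∈ (hfib j).toFinset, P m x * P m z := by
    intro j l x z
    have h0 := horth j l x z
    rw [hK j x z] at h0
    rw [← h0]
    have h1 : (fun y => K j x y * K l z y)
        = fun y => ∑ m ∈ (hfib j).toFinset, ∑ m' ∈ (hfib l).toFinset,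
            (P m x * P m' z) * (P m y * P m' y) := by
      funext y
      rw [hK j x y, hK l z y, Finset.sum_mul_sum]
      refine Finset.sum_congr rfl fun m _ => Finset.sum_congr rfl fun m' _ => by ring
    rw [h1, integral_finset_sum _ fun m _ =>
        integrable_finset_sum _ fun m' _ => (hmul m m').const_mul _]
    refine Finset.sum_congr rfl fun m _ => ?_
    rw [integral_finset_sum _ fun m' _ => (hmul m m').const_mul _, Finset.sum_mul]
    refine Finset.sum_congr rfl fun m' _ => ?_
    rw [integral_const_mul]
    ring
  -- coefficient extraction from pointwise-vanishing combinations
  have hzero : ∀ (j : ℕ) (g : ι → ℝ),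
      (∀ x, ∑ m ∈ (hfib j).toFinset, g m * P m x = 0) →
      ∀ m, deg m = j → g m = 0 := by
    intro j g hg m hm
    haveI : Fintype {m : ι // deg m = j} := (hfib j).fintype
    have hsum : ∑ m' : {m : ι // deg m = j},
        g m'.1 • (hL2 m'.1).toLp (P m'.1) = 0 := by
      rw [Lp.eq_zero_iff_ae_eq_zero]
      have hae := lp_coeFn_sum (Finset.univ : Finset {m : ι // deg m = j})
        (fun m' => g m'.1 • (hL2 m'.1).toLp (P m'.1))
      refine hae.trans ?_
      have hae2 : ∀ m' : {m : ι // deg m = j},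
          ⇑(g m'.1 • (hL2 m'.1).toLp (P m'.1)) =ᵐ[μ] fun x => g m'.1 * P m'.1 x := by
        intro m'
        filter_upwards [Lp.coeFn_smul (g m'.1) ((hL2 m'.1).toLp (P m'.1)),
          (hL2 m'.1).coeFn_toLp] with x h1 h2
        simp [h1, h2]
      have hae3 : ∀ᵐ x ∂μ, ∀ m' : {m : ι // deg m = j},
          (g m'.1 • (hL2 m'.1).toLp (P m'.1)) x = g m'.1 * P m'.1 x :=
        (MeasureTheory.ae_all_iff).2 hae2
      filter_upwards [hae3] with x hx
      simp only [Pi.zero_apply]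
      rw [Finset.sum_congr rfl fun m' _ => hx m']
      rw [← Finset.sum_subtype (p := fun m => deg m = j) (hfib j).toFinset
        (fun m' => by simpa using (hfib j).mem_toFinset) (fun m' => g m' * P m' x)]
      exact hg x
    exact linearIndependent_iff'.mp (hind j) Finset.univ (fun m' => g m'.1)
      (by simpa using hsum) ⟨m, hm⟩ (Finset.mem_univ _)
  intro m0 m1
  set j := deg m0 with hj
  set l := deg m1 with hl
  -- first extraction: row identity
  have hrow : ∀ z, ∑ m' ∈ (hfib l).toFinset, (∫ y, P m0 y * P m' y ∂μ) * P m' z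
      = (if j = l then (1 : ℝ) else 0) * P m0 z := by
    intro z
    have := hzero j (fun m => (∑ m' ∈ (hfib l).toFinset,
        (∫ y, P m y * P m' y ∂μ) * P m' z) - (if j = l then (1 : ℝ) else 0) * P m z)
      (fun x => by
        have hk := key j l x z
        rw [Finset.mul_sum] at hk
        simp only [sub_mul, Finset.sum_sub_distrib, hk]
        rw [sub_eq_zero]
        exact Finset.sum_congr rfl fun m _ => by ring)
      m0 rfl
    exact sub_eq_zero.mp this
  -- second extraction
  have hcol := hzero l (fun m' => (∫ y, P m0 y * P m' y ∂μ) -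
      (if m0 = m' then (1 : ℝ) else 0))
    (fun z => by
      simp only [sub_mul, Finset.sum_sub_distrib]
      rw [sub_eq_zero, hrow z]
      simp only [ite_mul, one_mul, zero_mul, Finset.sum_ite_eq]
      by_cases hjl : j = l
      · have : m0 ∈ (hfib l).toFinset := (hfib l).mem_toFinset.2 (hjl ▸ hj.symm)
        simp [hjl, this]
      · have : m0 ∉ (hfib l).toFinset := fun hmem => hjl (hj ▸ ((hfib l).mem_toFinset.1 hmem))
        simp [hjl, this])
    m1 rfl
  exact sub_eq_zero.mp hcol
end
end
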